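/- Let (X,ρ) be a compact metric space, f : X → X continuous, m ∈ ℕ, ε > 0, and x ∈ X. Let (n_j)_{j≥1} be an increasing sequence of positive integers with n_{j+1}/n_j → 1 as j → ∞. Then ĉ^f_m(x,ε) = limsup_{j→∞} C^f_m(x, n_j, ε) and č^f_m(x,ε) = liminf_{j→∞} C^f_m(x, n_j, ε). -/

import Mathlib

open Filter Topology Set MeasureTheory

section Defs

variable {X : Type*} [MetricSpace X]

/-- Bowen's metric `ρ^f_m(y,z) = max_{0 ≤ i < m} ρ(f^i y, f^i z)`. -/
noncomputable def bowenDist (f : X → X) (m : ℕ) (y z : X) : ℝ :=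
  (((Finset.range m).sup fun i => nndist (f^[i] y) (f^[i] z)) : NNReal)

open scoped Classical in
/-- The correlation sum `C^f_m(x,n,ε)`. -/
noncomputable def corrSum (f : X → X) (m : ℕ) (x : X) (n : ℕ) (ε : ℝ) : ℝ :=
  (((Finset.range n ×ˢ Finset.range n).filter fun q =>
      bowenDist f m (f^[q.1] x) (f^[q.2] x) ≤ ε).card : ℝ) / (n : ℝ) ^ 2

/-- `ĉ^f_m(x,ε) = limsup_{n→∞} C^f_m(x,n,ε)`. -/
noncomputable def corrUpper (f : X → X) (m : ℕ) (x : X) (ε : ℝ) : ℝ :=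
  Filter.limsup (fun n : ℕ => corrSum f m x n ε) Filter.atTop

/-- `č^f_m(x,ε) = liminf_{n→∞} C^f_m(x,n,ε)`. -/
noncomputable def corrLower (f : X → X) (m : ℕ) (x : X) (ε : ℝ) : ℝ :=
  Filter.liminf (fun n : ℕ => corrSum f m x n ε) Filter.atTop

/-- The upper local correlation entropy `entr⁺(f,x) = lim_{ε→0⁺} limsup_m (−1/m) log č^f_m(x,ε)`;
the limit as `ε → 0⁺` exists by monotonicity in `ε`, and is expressed here as a `limsup`
along `𝓝[>] 0` (with values in `EReal`). -/
noncomputable def entrUpper (f : X → X) (x : X) : EReal :=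
  Filter.limsup (fun ε : ℝ =>
      Filter.limsup (fun m : ℕ => ((-(1 / (m : ℝ)) * Real.log (corrLower f m x ε) : ℝ) : EReal))
        Filter.atTop)
    (𝓝[>] (0 : ℝ))

/-- The lower local correlation entropy `entr⁻(f,x) = lim_{ε→0⁺} liminf_m (−1/m) log ĉ^f_m(x,ε)`. -/
noncomputable def entrLower (f : X → X) (x : X) : EReal :=
  Filter.limsup (fun ε : ℝ =>
      Filter.liminf (fun m : ℕ => ((-(1 / (m : ℝ)) * Real.log (corrUpper f m x ε) : ℝ) : EReal))
        Filter.atTop)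
    (𝓝[>] (0 : ℝ))

/-- `r_m(ε,K)`: the smallest cardinality of a subset of `K` which `(m,ε)`-spans `K`. -/
noncomputable def spanNumOn (f : X → X) (K : Set X) (m : ℕ) (ε : ℝ) : ℕ :=
  sInf {k : ℕ | ∃ A : Finset X, ↑A ⊆ K ∧ A.card = k ∧ ∀ y ∈ K, ∃ a ∈ A, bowenDist f m y a ≤ ε}

/-- Bowen's topological entropy of `f` on `K` (for `K = univ`, of `f` itself;
for closed invariant `K`, of the restriction of `f` to `K`). -/
noncomputable def topEntropyOn (f : X → X) (K : Set X) : EReal :=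
  Filter.limsup (fun ε : ℝ =>
      Filter.limsup (fun n : ℕ => (((1 / (n : ℝ)) * Real.log (spanNumOn f K n ε) : ℝ) : EReal))
        Filter.atTop)
    (𝓝[>] (0 : ℝ))

end Defs


section Aux

variable {X : Type*} [MetricSpace X]

open scoped Classical in
private noncomputable def corrCard (f : X → X) (m : ℕ) (x : X) (ε : ℝ) (n : ℕ) : ℕ :=
  ((Finset.range n ×ˢ Finset.range n).filter fun q =>
      bowenDist f m (f^[q.1] x) (f^[q.2] x) ≤ ε).card

private lemma corrSum_eq (f : X → X) (m : ℕ) (x : X) (ε : ℝ) (n : ℕ) :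
    corrSum f m x n ε = (corrCard f m x ε n : ℝ) / (n : ℝ) ^ 2 := rfl

private lemma corrCard_mono (f : X → X) (m : ℕ) (x : X) (ε : ℝ) {n n' : ℕ} (h : n ≤ n') :
    corrCard f m x ε n ≤ corrCard f m x ε n' := by
  classical
  refine Finset.card_le_card (Finset.filter_subset_filter _ ?_)
  exact Finset.product_subset_product (Finset.range_subset_range.2 h) (Finset.range_subset_range.2 h)

private lemma corrCard_le_sq (f : X → X) (m : ℕ) (x : X) (ε : ℝ) (n : ℕ) :
    corrCard f m x ε n ≤ n ^ 2 := by
  classical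
  calc corrCard f m x ε n ≤ (Finset.range n ×ˢ Finset.range n).card :=
        Finset.card_filter_le _ _
    _ = n ^ 2 := by simp [sq]

private lemma corrSum_nonneg (f : X → X) (m : ℕ) (x : X) (ε : ℝ) (n : ℕ) :
    0 ≤ corrSum f m x n ε := by
  rw [corrSum_eq]; positivity

private lemma corrSum_le_one (f : X → X) (m : ℕ) (x : X) (ε : ℝ) (n : ℕ) :
    corrSum f m x n ε ≤ 1 := by
  rcases Nat.eq_zero_or_pos n with rfl | hn
  · simp [corrSum_eq]
  · rw [corrSum_eq, div_le_one (by positivity)]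
    exact_mod_cast corrCard_le_sq f m x ε n

private lemma corrSum_upper_bound (f : X → X) (m : ℕ) (x : X) (ε : ℝ) {p n q : ℕ}
    (hp : 0 < p) (h1 : p ≤ n) (h2 : n ≤ q) :
    corrSum f m x n ε ≤ corrSum f m x q ε + (((q : ℝ) / (p : ℝ)) ^ 2 - 1) := by
  have hq : 0 < q := hp.trans_le (h1.trans h2)
  have hn : 0 < n := hp.trans_le h1
  have hp' : (0 : ℝ) < (p : ℝ) := by exact_mod_cast hp
  have hq' : (0 : ℝ) < (q : ℝ) := by exact_mod_cast hq
  have hn' : (0 : ℝ) < (n : ℝ) := by exact_mod_cast hn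
  have hpn : (p : ℝ) ≤ (n : ℝ) := by exact_mod_cast h1
  have hpq : (p : ℝ) ≤ (q : ℝ) := by exact_mod_cast h1.trans h2
  set A : ℝ := (corrCard f m x ε q : ℝ) with hA
  have hA0 : (0 : ℝ) ≤ A := Nat.cast_nonneg _
  have hAq : A ≤ (q : ℝ) ^ 2 := by
    rw [hA]; exact_mod_cast corrCard_le_sq f m x ε q
  have step1 : corrSum f m x n ε ≤ A / (p : ℝ) ^ 2 := by
    rw [corrSum_eq]
    refine div_le_div₀ hA0 ?_ (pow_pos hp' 2) (by gcongr)
    rw [hA]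
    exact_mod_cast corrCard_mono f m x ε h2
  refine step1.trans ?_
  have hpq2 : (p : ℝ) ^ 2 ≤ (q : ℝ) ^ 2 := by gcongr
  have e1 : A / (p : ℝ) ^ 2 = (A * (q : ℝ) ^ 2) / ((p : ℝ) ^ 2 * (q : ℝ) ^ 2) := by
    rw [mul_comm ((p:ℝ)^2) _, ← div_div, mul_div_assoc, div_self (by positivity), mul_one]
  have e2 : corrSum f m x q ε + (((q : ℝ) / (p : ℝ)) ^ 2 - 1)
      = (A * (p : ℝ) ^ 2 + ((q : ℝ) ^ 2 - (p : ℝ) ^ 2) * (q : ℝ) ^ 2)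
        / ((p : ℝ) ^ 2 * (q : ℝ) ^ 2) := by
    rw [corrSum_eq, ← hA]
    field_simp
    try tauto
  rw [e1, e2, div_le_div_iff₀ (by positivity) (by positivity)]
  nlinarith [mul_le_mul_of_nonneg_right hAq (sub_nonneg.2 hpq2),
    mul_pos (pow_pos hp' 2) (pow_pos hq' 2)]

private lemma corrSum_lower_bound (f : X → X) (m : ℕ) (x : X) (ε : ℝ) {p n q : ℕ}
    (hp : 0 < p) (h1 : p ≤ n) (h2 : n ≤ q) :
    corrSum f m x p ε - (1 - ((p : ℝ) / (q : ℝ)) ^ 2) ≤ corrSum f m x n ε := by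
  have hq : 0 < q := hp.trans_le (h1.trans h2)
  have hn : 0 < n := hp.trans_le h1
  have hp' : (0 : ℝ) < (p : ℝ) := by exact_mod_cast hp
  have hq' : (0 : ℝ) < (q : ℝ) := by exact_mod_cast hq
  have hn' : (0 : ℝ) < (n : ℝ) := by exact_mod_cast hn
  have hnq : (n : ℝ) ≤ (q : ℝ) := by exact_mod_cast h2
  have hpq : (p : ℝ) ≤ (q : ℝ) := by exact_mod_cast h1.trans h2
  set A : ℝ := (corrCard f m x ε p : ℝ) with hA
  have hA0 : (0 : ℝ) ≤ A := Nat.cast_nonneg _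
  have hAp : A ≤ (p : ℝ) ^ 2 := by
    rw [hA]; exact_mod_cast corrCard_le_sq f m x ε p
  have step1 : A / (q : ℝ) ^ 2 ≤ corrSum f m x n ε := by
    rw [corrSum_eq]
    refine div_le_div₀ (Nat.cast_nonneg _) ?_ (pow_pos hn' 2) (by gcongr)
    rw [hA]
    exact_mod_cast corrCard_mono f m x ε h1
  refine le_trans ?_ step1
  have hpq2 : (p : ℝ) ^ 2 ≤ (q : ℝ) ^ 2 := by gcongr
  have e1 : A / (q : ℝ) ^ 2 = (A * (p : ℝ) ^ 2) / ((p : ℝ) ^ 2 * (q : ℝ) ^ 2) := by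
    rw [← div_div, mul_div_assoc, div_self (by positivity), mul_one]
  have e2 : corrSum f m x p ε - (1 - ((p : ℝ) / (q : ℝ)) ^ 2)
      = (A * (q : ℝ) ^ 2 - ((q : ℝ) ^ 2 - (p : ℝ) ^ 2) * (p : ℝ) ^ 2)
        / ((p : ℝ) ^ 2 * (q : ℝ) ^ 2) := by
    rw [corrSum_eq, ← hA]
    field_simp
    try tauto
  rw [e1, e2, div_le_div_iff₀ (by positivity) (by positivity)]
  nlinarith [mul_le_mul_of_nonneg_right hAp (sub_nonneg.2 hpq2),
    mul_pos (pow_pos hp' 2) (pow_pos hq' 2)]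

end Aux

/-- If `(n_j)` is an increasing sequence of positive integers with `n_{j+1}/n_j → 1`, then
`ĉ^f_m(x,ε) = limsup_j C^f_m(x,n_j,ε)` and `č^f_m(x,ε) = liminf_j C^f_m(x,n_j,ε)`. -/
theorem corrUpper_corrLower_via_subsequence {X : Type*} [MetricSpace X] [CompactSpace X]
    (f : X → X) (hf : Continuous f) (m : ℕ) (hm : 0 < m) (ε : ℝ) (hε : 0 < ε) (x : X)
    (a : ℕ → ℕ) (hpos : ∀ j, 0 < a j) (hmono : StrictMono a)
    (hratio : Filter.Tendsto (fun j : ℕ => (a (j + 1) : ℝ) / (a j : ℝ)) Filter.atTop (𝓝 1)) :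
    corrUpper f m x ε = Filter.limsup (fun j : ℕ => corrSum f m x (a j) ε) Filter.atTop ∧
    corrLower f m x ε = Filter.liminf (fun j : ℕ => corrSum f m x (a j) ε) Filter.atTop := by
  classical
  set u : ℕ → ℝ := fun n => corrSum f m x n ε with hu
  have hu0 : ∀ n, 0 ≤ u n := fun n => corrSum_nonneg f m x ε n
  have hu1 : ∀ n, u n ≤ 1 := fun n => corrSum_le_one f m x ε n
  have hmap : Tendsto a atTop atTop := hmono.tendsto_atTop
  -- the index function J
  have hSb : ∀ n : ℕ, BddAbove {j : ℕ | a j ≤ n} :=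
    fun n => ⟨n, fun j hj => le_trans hmono.le_apply hj⟩
  set J : ℕ → ℕ := fun n => sSup {j : ℕ | a j ≤ n} with hJdef
  have hJ_mem : ∀ n, a 0 ≤ n → a (J n) ≤ n := fun n hn =>
    Nat.sSup_mem ⟨0, by exact hn⟩ (hSb n)
  have hJ_lt : ∀ n, a 0 ≤ n → n ≤ a (J n + 1) := by
    intro n hn
    by_contra hcon
    push_neg at hcon
    have : J n + 1 ≤ J n := le_csSup (hSb n) hcon.le
    omega
  have hJtend : Tendsto J atTop atTop := by
    refine tendsto_atTop.2 fun k => (eventually_ge_atTop (a k)).mono fun n hn => ?_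
    exact le_csSup (hSb n) hn
  -- ratio error sequences
  have hapos' : ∀ j, (0 : ℝ) < (a j : ℝ) := fun j => by exact_mod_cast hpos j
  set r : ℕ → ℝ := fun j => (a (j + 1) : ℝ) / (a j : ℝ) with hrdef
  have hr1 : ∀ j, 1 ≤ r j := fun j =>
    (one_le_div (hapos' j)).2 (by exact_mod_cast (hmono (lt_add_one j)).le)
  set e : ℕ → ℝ := fun j => r j ^ 2 - 1 with hedef
  have he0 : ∀ j, 0 ≤ e j := fun j => sub_nonneg.2 (one_le_pow₀ (hr1 j))
  have hetend : Tendsto e atTop (𝓝 0) := by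
    have h := (hratio.pow 2).sub_const 1
    simpa using h
  set e' : ℕ → ℝ := fun j => 1 - ((a j : ℝ) / (a (j + 1) : ℝ)) ^ 2 with he'def
  have hs1 : ∀ j, (a j : ℝ) / (a (j + 1) : ℝ) ≤ 1 :=
    fun j => (div_le_one (hapos' (j + 1))).2 (by exact_mod_cast (hmono (lt_add_one j)).le)
  have hs0 : ∀ j, 0 ≤ (a j : ℝ) / (a (j + 1) : ℝ) := fun j => by positivity
  have he'0 : ∀ j, 0 ≤ e' j := fun j => sub_nonneg.2 (pow_le_one₀ (hs0 j) (hs1 j))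
  have hstend : Tendsto (fun j => (a j : ℝ) / (a (j + 1) : ℝ)) atTop (𝓝 1) := by
    have h1 : Tendsto (fun j => (r j)⁻¹) atTop (𝓝 ((1 : ℝ)⁻¹)) := hratio.inv₀ one_ne_zero
    simpa [hrdef, inv_div] using h1
  have he'tend : Tendsto e' atTop (𝓝 0) := by
    have h := (hstend.pow 2).const_sub 1
    simpa using h
  -- eventual pointwise bounds
  have hUB : ∀ᶠ n in atTop, u n ≤ u (a (J n + 1)) + e (J n) :=
    (eventually_ge_atTop (a 0)).mono fun n hn =>
      corrSum_upper_bound f m x ε (hpos (J n)) (hJ_mem n hn) (hJ_lt n hn)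
  have hLB : ∀ᶠ n in atTop, u (a (J n)) - e' (J n) ≤ u n :=
    (eventually_ge_atTop (a 0)).mono fun n hn =>
      corrSum_lower_bound f m x ε (hpos (J n)) (hJ_mem n hn) (hJ_lt n hn)
  -- boundedness helpers
  have hbddle : ∀ (g : ℕ → ℕ), IsBoundedUnder (· ≤ ·) atTop (fun n => u (g n)) :=
    fun g => isBoundedUnder_of ⟨1, fun n => hu1 (g n)⟩
  have hbddge : ∀ (g : ℕ → ℕ), IsBoundedUnder (· ≥ ·) atTop (fun n => u (g n)) :=
    fun g => isBoundedUnder_of ⟨0, fun n => hu0 (g n)⟩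
  have hcompU : ∀ (g : ℕ → ℕ), Filter.limsup (fun n : ℕ => u (g n)) atTop
      = Filter.limsup u (Filter.map g atTop) := by
    intro g
    show limsSup (Filter.map (fun n : ℕ => u (g n)) atTop) = limsSup (Filter.map u (Filter.map g atTop))
    rw [Filter.map_map]
    rfl
  have hcompL : ∀ (g : ℕ → ℕ), Filter.liminf (fun n : ℕ => u (g n)) atTop
      = Filter.liminf u (Filter.map g atTop) := by
    intro g
    show limsInf (Filter.map (fun n : ℕ => u (g n)) atTop) = limsInf (Filter.map u (Filter.map g atTop))
    rw [Filter.map_map]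
    rfl
  have hucob : ∀ (l : Filter ℕ) [l.NeBot], IsCoboundedUnder (· ≤ ·) l u := by
    intro l _
    exact IsBoundedUnder.isCoboundedUnder_le (isBoundedUnder_of ⟨0, fun n => hu0 n⟩)
  have hucob' : ∀ (l : Filter ℕ) [l.NeBot], IsCoboundedUnder (· ≥ ·) l u := by
    intro l _
    exact IsBoundedUnder.isCoboundedUnder_ge (isBoundedUnder_of ⟨1, fun n => hu1 n⟩)
  constructor
  · -- limsup statement
    refine le_antisymm ?_ ?_
    · -- limsup u ≤ limsup (u ∘ a)
      set V : ℕ → ℝ := fun j => u (a (j + 1)) + e j with hVdef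
      have heble : IsBoundedUnder (· ≤ ·) atTop e := hetend.isBoundedUnder_le
      obtain ⟨c, hc⟩ := heble
      rw [eventually_map] at hc
      have hVb : IsBoundedUnder (· ≤ ·) atTop V :=
        ⟨1 + c, eventually_map.2 (hc.mono fun j hj => add_le_add (hu1 _) hj)⟩
      obtain ⟨b, hb⟩ := hVb
      rw [eventually_map] at hb
      have hVb' : IsBoundedUnder (· ≤ ·) atTop V := ⟨b, eventually_map.2 hb⟩
      have hVJb : IsBoundedUnder (· ≤ ·) atTop (fun n => V (J n)) :=
        ⟨b, eventually_map.2 (hJtend.eventually hb)⟩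
      have step1 : Filter.limsup u atTop ≤ Filter.limsup (fun n => V (J n)) atTop :=
        limsup_le_limsup hUB (hucob atTop) hVJb
      have step2 : Filter.limsup (fun n => V (J n)) atTop ≤ Filter.limsup V atTop := by
        have h1 : Filter.limsup (fun n : ℕ => V (J n)) atTop
            = Filter.limsup V (Filter.map J atTop) := by
          show limsSup (Filter.map (fun n : ℕ => V (J n)) atTop)
              = limsSup (Filter.map V (Filter.map J atTop))
          rw [Filter.map_map]
          rfl
        rw [h1]
        haveI : (Filter.map J atTop).NeBot := Filter.map_neBot
        refine limsup_le_limsup_of_le hJtend ?_ hVb'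
        exact IsBoundedUnder.isCoboundedUnder_le
          (isBoundedUnder_of ⟨0, fun n => add_nonneg (hu0 _) (he0 n)⟩)
      have step3 : Filter.limsup V atTop ≤ Filter.limsup (fun j => u (a j)) atTop := by
        have hVeq : V = (fun j => u (a (j + 1))) + e := rfl
        have hadd : Filter.limsup V atTop
            ≤ Filter.limsup (fun j => u (a (j + 1))) atTop + Filter.limsup e atTop := by
          rw [hVeq]
          exact limsup_add_le (hbddge _) (hbddle _)
            (IsBoundedUnder.isCoboundedUnder_le (isBoundedUnder_of ⟨0, he0⟩))
            hetend.isBoundedUnder_le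
        have he_lim : Filter.limsup e atTop = 0 := hetend.limsup_eq
        have hshift : Filter.limsup (fun j => u (a (j + 1))) atTop
            = Filter.limsup (fun j => u (a j)) atTop :=
          limsup_nat_add (fun j => u (a j)) 1
        rw [he_lim, hshift, add_zero] at hadd
        exact hadd
      exact (step1.trans step2).trans step3
    · -- limsup (u ∘ a) ≤ limsup u
      rw [hcompU a]
      haveI : (Filter.map a atTop).NeBot := Filter.map_neBot
      exact limsup_le_limsup_of_le hmap (hucob _) (isBoundedUnder_of ⟨1, hu1⟩)
  · -- liminf statement
    refine le_antisymm ?_ ?_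
    · -- liminf u ≤ liminf (u ∘ a)
      rw [hcompL a]
      haveI : (Filter.map a atTop).NeBot := Filter.map_neBot
      exact liminf_le_liminf_of_le hmap (isBoundedUnder_of ⟨0, hu0⟩) (hucob' _)
    · -- liminf (u ∘ a) ≤ liminf u
      set W : ℕ → ℝ := fun j => u (a j) - e' j with hWdef
      have he'ble : IsBoundedUnder (· ≤ ·) atTop e' := he'tend.isBoundedUnder_le
      obtain ⟨c, hc⟩ := he'ble
      rw [eventually_map] at hc
      have hWlb : ∀ j, -c ≤ W j ∨ True := fun _ => Or.inr trivial
      have hWb : IsBoundedUnder (· ≥ ·) atTop W :=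
        ⟨-c, eventually_map.2 (hc.mono fun j hj => by
          simp only [hWdef]
          have := hu0 (a j)
          linarith)⟩
      obtain ⟨b, hb⟩ := hWb
      rw [eventually_map] at hb
      have hWb' : IsBoundedUnder (· ≥ ·) atTop W := ⟨b, eventually_map.2 hb⟩
      have hWJb : IsBoundedUnder (· ≥ ·) atTop (fun n => W (J n)) :=
        ⟨b, eventually_map.2 (hJtend.eventually hb)⟩
      have step1 : Filter.liminf (fun n => W (J n)) atTop ≤ Filter.liminf u atTop :=
        liminf_le_liminf hLB hWJb (hucob' atTop)
      have step2 : Filter.liminf W atTop ≤ Filter.liminf (fun n => W (J n)) atTop := by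
        have h1 : Filter.liminf (fun n : ℕ => W (J n)) atTop
            = Filter.liminf W (Filter.map J atTop) := by
          show limsInf (Filter.map (fun n : ℕ => W (J n)) atTop)
              = limsInf (Filter.map W (Filter.map J atTop))
          rw [Filter.map_map]
          rfl
        rw [h1]
        haveI : (Filter.map J atTop).NeBot := Filter.map_neBot
        refine liminf_le_liminf_of_le hJtend hWb' ?_
        exact IsBoundedUnder.isCoboundedUnder_ge
          (isBoundedUnder_of ⟨1, fun n => by
            simp only [hWdef]
            have := hu1 (a n)
            have := he'0 n
            linarith⟩)
      have step3 : Filter.liminf (fun j => u (a j)) atTop ≤ Filter.liminf W atTop := by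
        have hWeq : W = (fun j => u (a j)) + (fun j => -(e' j)) :=
          funext fun j => sub_eq_add_neg _ _
        have hadd : Filter.liminf (fun j => u (a j)) atTop
              + Filter.liminf (fun j => -(e' j)) atTop ≤ Filter.liminf W atTop := by
          rw [hWeq]
          refine le_liminf_add (hbddge _) (hbddle _) ?_ ?_
          · exact he'tend.neg.isBoundedUnder_ge
          · exact IsBoundedUnder.isCoboundedUnder_ge
              (isBoundedUnder_of ⟨0, fun j => neg_nonpos.2 (he'0 j)⟩)
        have he'_lim : Filter.liminf (fun j => -(e' j)) atTop = 0 := by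
          have := he'tend.neg.liminf_eq
          simpa using this
        rw [he'_lim, add_zero] at hadd
        exact hadd
      exact step3.trans (step2.trans step1)
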